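/- arXiv:1611.04041 — 2 statements merged into one kernel-verified Lean document; each statement's English description precedes it below -/
import Mathlib

section
/- The map E : 𝔠 → ℂ defined by E(x, y) = exp(x)·exp(iy) for x ∈ ℝ and E(⊥, y) = 0 is a continuous monoid homomorphism from the additive monoid 𝔠 to the multiplicative monoid ℂ: E is continuous, E(0,0) = 1, and E(p + q) = E(p)·E(q) for all p, q ∈ 𝔠. -/
open Set Filter Topology

/-- The order topology on `WithBot ℝ`. -/
instance : TopologicalSpace (WithBot ℝ) := Preorder.topology _

instance : OrderTopology (WithBot ℝ) := ⟨rfl⟩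

/-- The exponential map `E : 𝔠 → ℂ`, `E (x, y) = exp x · exp (i y)` for real `x`, and
`E (⊥, y) = 0`. -/
noncomputable def E : WithBot ℝ × ℝ → ℂ :=
  fun p => (WithBot.recBotCoe (0 : ℂ) (fun x : ℝ => Complex.exp x) p.1) *
    Complex.exp (p.2 * Complex.I)

theorem isOpenEmbedding_coe' : IsOpenEmbedding ((↑) : ℝ → WithBot ℝ) := by
  have hr : range ((↑) : ℝ → WithBot ℝ) = Ioi ⊥ := WithBot.range_coe
  exact ⟨(WithBot.coe_strictMono).isEmbedding_of_ordConnected <| hr ▸ ordConnected_Ioi,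
    hr ▸ isOpen_Ioi⟩

noncomputable def g : WithBot ℝ → ℂ :=
  fun b => WithBot.recBotCoe (0 : ℂ) (fun x : ℝ => Complex.exp x) b

theorem continuous_g : Continuous g := by
  rw [continuous_iff_continuousAt]
  intro b
  induction b using WithBot.recBotCoe with
  | bot =>
    have : ContinuousAt g ⊥ ↔ Tendsto g (𝓝 ⊥) (𝓝 0) := Iff.rfl
    rw [this, Metric.tendsto_nhds]
    intro ε hε
    filter_upwards [Iio_mem_nhds (WithBot.bot_lt_coe (Real.log ε))] with b hb
    induction b using WithBot.recBotCoe with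
    | bot => simpa [g] using hε
    | coe y =>
      rw [mem_Iio, WithBot.coe_lt_coe] at hb
      simp only [g, WithBot.recBotCoe_coe, dist_zero_right, Complex.norm_exp]
      simpa using (Real.exp_lt_exp.2 hb).trans_le (Real.exp_log hε).le
  | coe x =>
    have : ContinuousAt (g ∘ ((↑) : ℝ → WithBot ℝ)) x :=
      (Complex.continuous_exp.comp Complex.continuous_ofReal).continuousAt
    rw [ContinuousAt, ← isOpenEmbedding_coe'.map_nhds_eq, tendsto_map'_iff]
    exact this

/-- `E` is a continuous monoid homomorphism from the additive monoid `𝔠 = WithBot ℝ × ℝ`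
to the multiplicative monoid `ℂ`. -/
theorem stmt2 :
    Continuous E ∧
    E (0, 0) = 1 ∧
    ∀ p q : WithBot ℝ × ℝ, E (p + q) = E p * E q := by
  refine ⟨?_, ?_, ?_⟩
  · exact (continuous_g.comp continuous_fst).mul
      (Complex.continuous_exp.comp ((Complex.continuous_ofReal.comp continuous_snd).mul continuous_const))
  · show Complex.exp ((0 : ℝ) : ℂ) * Complex.exp (((0 : ℝ) : ℂ) * Complex.I) = 1
    simp
  · rintro ⟨x, y⟩ ⟨x', y'⟩
    induction x using WithBot.recBotCoe with
    | bot => simp [E]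
    | coe a =>
      induction x' using WithBot.recBotCoe with
      | bot => simp [E]
      | coe b =>
        show E (((a : WithBot ℝ) + b, y + y')) = _
        rw [← WithBot.coe_add]
        simp only [E, WithBot.recBotCoe_coe]
        push_cast
        simp only [add_mul, Complex.exp_add]
        ring
end

section
/- For every positive integer n, the map fₙ : 𝔠 → ℂ defined by fₙ(x, y) = exp(x/n)·exp(iy/n) for x ∈ ℝ and fₙ(⊥, y) = 0 is a continuous monoid homomorphism from the additive monoid 𝔠 to the multiplicative monoid ℂ, and satisfies fₙ(p)ⁿ = E(p) for every p ∈ 𝔠. -/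
noncomputable def f (n : ℕ) : WithBot ℝ × ℝ → ℂ :=
  fun p => (WithBot.recBotCoe (0 : ℂ) (fun x : ℝ => Complex.exp (x / n)) p.1) *
    Complex.exp (p.2 * Complex.I / n)

noncomputable def h (n : ℕ) : WithBot ℝ → ℝ :=
  WithBot.recBotCoe 0 (fun x => Real.exp (x / n))

lemma h_mem (n : ℕ) (x : WithBot ℝ) : h n x ∈ Set.Ici (0:ℝ) := by
  induction x using WithBot.recBotCoe with
  | bot => simp [h]
  | coe x => exact le_of_lt (Real.exp_pos _)

lemma h_strictMono (n : ℕ) (hn : 0 < n) : StrictMono (h n) := by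
  intro a b hab
  induction b using WithBot.recBotCoe with
  | bot => exact absurd hab (by simp)
  | coe b =>
    induction a using WithBot.recBotCoe with
    | bot => exact Real.exp_pos _
    | coe a =>
      have : a < b := by exact_mod_cast hab
      exact Real.exp_lt_exp.mpr (by
        apply div_lt_div_of_pos_right this
        exact_mod_cast hn)

lemma h_surj (n : ℕ) (hn : 0 < n) :
    Function.Surjective (fun x => (⟨h n x, h_mem n x⟩ : Set.Ici (0:ℝ))) := by
  rintro ⟨t, ht⟩
  rcases eq_or_lt_of_le (Set.mem_Ici.mp ht) with h0 | h0
  · exact ⟨⊥, by simp [h, ← h0]⟩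
  · refine ⟨((n : ℝ) * Real.log t : ℝ), ?_⟩
    have hn' : (n : ℝ) ≠ 0 := by exact_mod_cast hn.ne'
    simp only [h, WithBot.recBotCoe_coe]
    ext
    simp [mul_div_assoc, mul_div_cancel_left₀ _ hn', Real.exp_log h0]

noncomputable def hIso (n : ℕ) (hn : 0 < n) : WithBot ℝ ≃o Set.Ici (0:ℝ) :=
  StrictMono.orderIsoOfSurjective _
    (fun a b hab => h_strictMono n hn hab) (h_surj n hn)

lemma h_continuous (n : ℕ) (hn : 0 < n) : Continuous (h n) := by
  have : h n = Subtype.val ∘ (hIso n hn) := rfl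
  rw [this]
  exact continuous_subtype_val.comp (hIso n hn).toHomeomorph.continuous

/-- For every positive integer `n`, the map `fₙ` is a continuous monoid homomorphism from
the additive monoid `𝔠` to the multiplicative monoid `ℂ`, and `fₙ(p)ⁿ = E(p)` for all `p`. -/
theorem stmt7 :
    ∀ n : ℕ, 0 < n →
      Continuous (f n) ∧
      f n (0, 0) = 1 ∧
      (∀ p q : WithBot ℝ × ℝ, f n (p + q) = f n p * f n q) ∧
      (∀ p : WithBot ℝ × ℝ, (f n p) ^ n = E p) := by
  intro n hn
  have hn' : (n : ℂ) ≠ 0 := by exact_mod_cast hn.ne'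
  have key : ∀ x : WithBot ℝ,
      (WithBot.recBotCoe (0 : ℂ) (fun x : ℝ => Complex.exp (x / n)) x) = ((h n x : ℝ) : ℂ) := by
    intro x
    induction x using WithBot.recBotCoe with
    | bot => simp [h]
    | coe x =>
      simp only [h, WithBot.recBotCoe_coe, ← Complex.ofReal_exp]
      norm_num
  refine ⟨?_, ?_, ?_, ?_⟩
  · have : f n = fun p => ((h n p.1 : ℝ) : ℂ) * Complex.exp (p.2 * Complex.I / n) := by
      funext p; simp [f, key]
    rw [this]
    exact ((Complex.continuous_ofReal.comp ((h_continuous n hn).comp continuous_fst)).mul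
      (Complex.continuous_exp.comp (by fun_prop)))
  · show WithBot.recBotCoe (0:ℂ) (fun x : ℝ => Complex.exp (x / n)) (((0:ℝ):WithBot ℝ)) *
      Complex.exp ((0:ℝ) * Complex.I / n) = 1
    rw [WithBot.recBotCoe_coe]
    simp
  · intro p q
    obtain ⟨a, y⟩ := p
    obtain ⟨b, z⟩ := q
    induction a using WithBot.recBotCoe with
    | bot => simp [f, Prod.mk_add_mk]
    | coe a =>
      induction b using WithBot.recBotCoe with
      | bot => simp [f, Prod.mk_add_mk]
      | coe b =>
        have : ((a : WithBot ℝ) + b) = ((a + b : ℝ) : WithBot ℝ) := by norm_cast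
        simp only [f, Prod.mk_add_mk, this, WithBot.recBotCoe_coe]
        rw [← Complex.exp_add, ← Complex.exp_add, ← Complex.exp_add, ← Complex.exp_add]
        ring_nf
        push_cast
        ring_nf
  · intro p
    obtain ⟨a, y⟩ := p
    induction a using WithBot.recBotCoe with
    | bot => simp [f, E, zero_pow hn.ne']
    | coe a =>
      simp only [f, E, WithBot.recBotCoe_coe, mul_pow, ← Complex.exp_nat_mul]
      rw [mul_div_cancel₀ _ hn', mul_div_cancel₀ _ hn']
end
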